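/- Let w be a cyclically reduced word of length m over Σ_k with an appearance of u^{-1} at position j overlapping an appearance of u at position 0, where u is the prefix of w of length |u|; i.e., g_{i_l}^{α_l} = g_{i_{j+|u|-l}}^{-α_{j+|u|-l}} (indices mod m) for l = 1,...,|u|, with 1 ≤ j ≤ |u|+1. Then a contradiction arises: if j and |u| have the same parity, setting l = (j+|u|)/2 gives g_{i_l}^{α_l} = g_{i_l}^{-α_l}, which is impossible; if they have different parity, setting l = (j+|u|-1)/2 gives g_{i_l}^{α_l} = g_{i_{l+1}}^{-α_{l+1}}, contradicting cyclic reducedness. -/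

import Mathlib

/-- A letter `g_i^{±1}` of the alphabet `Σ_k`. -/
abbrev Letter (k : ℕ) := Fin k × Bool

/-- The inverse letter: `(g_i^{α})⁻¹ = g_i^{-α}`. -/
def Letter.inv {k : ℕ} (x : Letter k) : Letter k := (x.1, !x.2)

theorem modLt {α : Type*} {w : List α} (hw : w ≠ []) (x : ℕ) : x % w.length < w.length :=
  Nat.mod_lt _ (List.length_pos_of_ne_nil hw)

/-- `w` is cyclically reduced: no two cyclically consecutive letters are mutually inverse. -/
def CyclicallyReduced {k : ℕ} (w : List (Letter k)) : Prop :=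
  ∀ i : Fin w.length,
    w.get ⟨((i : ℕ) + 1) % w.length, Nat.mod_lt _ i.pos⟩ ≠ Letter.inv (w.get i)

/-- Let `w = g_{i_1}^{α_1} ⋯ g_{i_m}^{α_m}` be cyclically reduced, and suppose its prefix
`u` of length `L` has an appearance of `u⁻¹` at position `j`, overlapping the appearance
of `u` at position `0`; i.e. `g_{i_l}^{α_l} = g_{i_{j+L-l}}^{-α_{j+L-l}}` (indices mod `m`,
`1`-based) for `l = 1, …, L`, with `1 ≤ j ≤ L + 1`. Then a contradiction arises. -/
theorem stmt1 {k : ℕ} (w : List (Letter k)) (hw : w ≠ []) (hcyc : CyclicallyReduced w)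
    (L j : ℕ) (hL : 1 ≤ L) (hLm : L ≤ w.length) (hj1 : 1 ≤ j) (hj2 : j ≤ L + 1)
    (heq : ∀ l, 1 ≤ l → l ≤ L →
      w.get ⟨(l - 1) % w.length, modLt hw _⟩
        = Letter.inv (w.get ⟨(j + L - l - 1) % w.length, modLt hw _⟩)) :
    False := by
  rcases Nat.even_or_odd (j + L) with ⟨l, hl⟩ | ⟨l, hl⟩
  · -- same parity: l = (j+L)/2, then j+L-l = l
    have hl1 : 1 ≤ l := by omega
    have hl2 : l ≤ L := by omega
    have h := heq l hl1 hl2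
    have hidx : j + L - l - 1 = l - 1 := by omega
    simp only [hidx] at h
    simp [Letter.inv, Prod.ext_iff] at h
  · -- different parity: l = (j+L-1)/2, then j+L-l = l+1
    have hl1 : 1 ≤ l := by omega
    have hl2 : l ≤ L := by omega
    have h := heq l hl1 hl2
    have hidx : j + L - l - 1 = l := by omega
    simp only [hidx] at h
    have hc := hcyc ⟨(l - 1) % w.length, modLt hw _⟩
    have hix : (((l - 1) % w.length : ℕ) + 1) % w.length = l % w.length := by
      rw [Nat.mod_add_mod]
      congr 1
      omega
    apply hc
    have hget : w.get ⟨(((l - 1) % w.length : ℕ) + 1) % w.length,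
          Nat.mod_lt _ (Fin.pos ⟨(l - 1) % w.length, modLt hw _⟩)⟩
        = w.get ⟨l % w.length, modLt hw _⟩ := by
      congr 1
      exact Fin.ext hix
    rw [hget, h]
    simp [Letter.inv]
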